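/- If A is an n × n Hermitian matrix with eigenvalues λ₁(A), …, λₙ(A) (listed with multiplicity) and i, j ∈ {1, …, n}, then the j-th component v_{i,j} of a unit eigenvector vᵢ associated to the eigenvalue λᵢ(A) satisfies |v_{i,j}|² · ∏_{k=1, k≠i}^{n} (λᵢ(A) − λ_k(A)) = ∏_{k=1}^{n−1} (λᵢ(A) − λ_k(M_j)), where λ₁(M_j), …, λ_{n−1}(M_j) are the eigenvalues of the (n−1) × (n−1) matrix M_j obtained from A by removing the j-th row and j-th column. -/

import Mathlib

open Matrix

open Polynomial Finset

lemma eval_charpoly'' {m : ℕ} (M : Matrix (Fin m) (Fin m) ℂ) (x : ℂ) :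
    M.charpoly.eval x = (x • (1 : Matrix (Fin m) (Fin m) ℂ) - M).det := by
  rw [Matrix.charpoly, ← Polynomial.coe_evalRingHom, RingHom.map_det]
  congr 1
  ext a b
  by_cases h : a = b <;>
    simp [h, charmatrix_apply, Matrix.one_apply, Matrix.diagonal_apply]

lemma adjugate_diag_eq {m : ℕ} (M : Matrix (Fin (m+1)) (Fin (m+1)) ℂ) (j : Fin (m+1)) :
    M.adjugate j j = (M.submatrix j.succAbove j.succAbove).det := by
  rw [Matrix.adjugate_fin_succ_eq_det_submatrix]
  have : Even ((j : ℕ) + (j : ℕ)) := ⟨j, rfl⟩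
  rw [this.neg_one_pow, one_mul]



/-- **Eigenvector-eigenvalue identity for Hermitian matrices.**  If `A` is an
`(n+1) × (n+1)` Hermitian matrix with eigenvalues `μ 1, …, μ (n+1)` listed with
multiplicity (i.e. the characteristic polynomial of `A` is `∏ (X - μ l)`), `v` is a unit
eigenvector of `A` for the eigenvalue `μ i`, and `ν 1, …, ν n` are the eigenvalues of the
principal submatrix `M_j` obtained from `A` by deleting the `j`-th row and column, then
`|v j|² ∏_{l ≠ i} (μ i - μ l) = ∏ l (μ i - ν l)`. -/
theorem hermitian_eigenvector_eigenvalue_identity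
    {n : ℕ} (A : Matrix (Fin (n + 1)) (Fin (n + 1)) ℂ) (hA : A.IsHermitian)
    (μ : Fin (n + 1) → ℝ)
    (hμ : A.charpoly = ∏ l, (Polynomial.X - Polynomial.C ((μ l : ℂ))))
    (i j : Fin (n + 1))
    (ν : Fin n → ℝ)
    (hν : (A.submatrix j.succAbove j.succAbove).charpoly =
      ∏ l, (Polynomial.X - Polynomial.C ((ν l : ℂ))))
    (v : Fin (n + 1) → ℂ) (hunit : star v ⬝ᵥ v = 1)
    (hv : A *ᵥ v = (μ i : ℂ) • v) :
    ‖v j‖ ^ 2 * ∏ l ∈ Finset.univ.erase i, (μ i - μ l) =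
      ∏ l, (μ i - ν l) := by
  set x : ℂ := ((μ i : ℝ) : ℂ) with hx
  set U : Matrix (Fin (n+1)) (Fin (n+1)) ℂ := (hA.eigenvectorUnitary : Matrix (Fin (n+1)) (Fin (n+1)) ℂ) with hUdef
  set d : Fin (n+1) → ℝ := hA.eigenvalues with hddef
  have h1 : U * star U = 1 := (Matrix.mem_unitaryGroup_iff).mp (hA.eigenvectorUnitary).2
  have h2 : star U * U = 1 := (Matrix.mem_unitaryGroup_iff').mp (hA.eigenvectorUnitary).2
  have hspec : A = U * diagonal (fun a => (d a : ℂ)) * star U := by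
    have := hA.spectral_theorem
    rw [Unitary.conjStarAlgAut_apply] at this
    exact this
  -- conjugation identity
  have hdiagsub : ∀ y : ℂ, y • (1 : Matrix (Fin (n+1)) (Fin (n+1)) ℂ)
      - diagonal (fun a => (d a : ℂ)) = diagonal (fun a => y - (d a : ℂ)) := by
    intro y
    ext a b
    by_cases h : a = b <;> simp [h, Matrix.diagonal_apply, Matrix.one_apply]
  have hconj : ∀ y : ℂ, y • (1 : Matrix (Fin (n+1)) (Fin (n+1)) ℂ) - A
      = U * diagonal (fun a => y - (d a : ℂ)) * star U := by
    intro y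
    rw [← hdiagsub y, mul_sub, sub_mul]
    have h3 : U * (y • (1 : Matrix (Fin (n+1)) (Fin (n+1)) ℂ)) * star U
        = y • (1 : Matrix (Fin (n+1)) (Fin (n+1)) ℂ) := by
      rw [mul_smul_comm, mul_one, smul_mul_assoc, h1]
    rw [h3, ← hspec]
  have hdetU : det U * det (star U) = 1 := by rw [← det_mul, h1, det_one]
  have hdet : ∀ y : ℂ, det (y • (1 : Matrix (Fin (n+1)) (Fin (n+1)) ℂ) - A)
      = ∏ a, (y - (d a : ℂ)) := by
    intro y
    rw [hconj y, det_mul, det_mul, det_diagonal]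
    linear_combination (∏ a, (y - (d a : ℂ))) * hdetU
  have hcharA : A.charpoly = ∏ l, (Polynomial.X - Polynomial.C ((d l : ℂ))) :=
    Polynomial.funext fun y => by
      rw [eval_charpoly'', hdet y]; simp [eval_prod]
  -- multiset equality
  have hroots : Multiset.map (fun l => ((μ l : ℝ) : ℂ)) Finset.univ.val
      = Multiset.map (fun l => ((d l : ℝ) : ℂ)) Finset.univ.val := by
    have e1 : A.charpoly.roots = Multiset.map (fun l => ((μ l : ℝ) : ℂ)) Finset.univ.val := by
      rw [hμ, Finset.prod_eq_multiset_prod]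
      have h := Polynomial.roots_multiset_prod_X_sub_C
        (Multiset.map (fun l => ((μ l : ℝ) : ℂ)) Finset.univ.val)
      rwa [Multiset.map_map, Function.comp_def] at h
    have e2 : A.charpoly.roots = Multiset.map (fun l => ((d l : ℝ) : ℂ)) Finset.univ.val := by
      rw [hcharA, Finset.prod_eq_multiset_prod]
      have h := Polynomial.roots_multiset_prod_X_sub_C
        (Multiset.map (fun l => ((d l : ℝ) : ℂ)) Finset.univ.val)
      rwa [Multiset.map_map, Function.comp_def] at h
    rw [← e1, e2]

  -- adjugate of U and star U
  have adjU : adjugate U = det U • star U := by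
    calc adjugate U = (star U * U) * adjugate U := by rw [h2, one_mul]
      _ = star U * (det U • 1) := by rw [mul_assoc, Matrix.mul_adjugate]
      _ = det U • star U := by rw [mul_smul_comm, mul_one]
  have adjSU : adjugate (star U) = det (star U) • U := by
    calc adjugate (star U) = (U * star U) * adjugate (star U) := by rw [h1, one_mul]
      _ = U * (det (star U) • 1) := by rw [mul_assoc, Matrix.mul_adjugate]
      _ = det (star U) • U := by rw [mul_smul_comm, mul_one]
  have hB : adjugate (x • (1 : Matrix (Fin (n+1)) (Fin (n+1)) ℂ) - A)
      = U * adjugate (diagonal (fun a => x - (d a : ℂ))) * star U := by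
    rw [hconj x, Matrix.adjugate_mul_distrib, Matrix.adjugate_mul_distrib, adjSU, adjU]
    simp only [smul_mul_assoc, mul_smul_comm, smul_smul]
    rw [hdetU, one_smul, ← mul_assoc]
  set e : Fin (n+1) → ℂ := fun a => ∏ k ∈ Finset.univ.erase a, (x - (d k : ℂ)) with hedef
  have hadjD : adjugate (diagonal (fun a => x - (d a : ℂ))) = diagonal e :=
    Matrix.adjugate_diagonal _
  have hjj : adjugate (x • (1 : Matrix (Fin (n+1)) (Fin (n+1)) ℂ) - A) j j
      = ∑ a, U j a * e a * star (U j a) := by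
    rw [hB, hadjD]
    simp only [Matrix.mul_apply, Matrix.star_apply]
    refine Finset.sum_congr rfl fun a _ => ?_
    congr 1
    rw [Finset.sum_eq_single a (fun b _ hb => by rw [Matrix.diagonal_apply_ne _ hb, mul_zero])
      (fun h => absurd (Finset.mem_univ a) h), Matrix.diagonal_apply_eq]
  have hRHS : ((∏ l, (μ i - ν l) : ℝ) : ℂ) = ∑ a, U j a * e a * star (U j a) := by
    rw [← hjj, adjugate_diag_eq]
    have hsub : (x • (1 : Matrix (Fin (n+1)) (Fin (n+1)) ℂ) - A).submatrix j.succAbove j.succAbove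
        = x • (1 : Matrix (Fin n) (Fin n) ℂ) - A.submatrix j.succAbove j.succAbove := by
      ext a b
      by_cases h : a = b
      · simp [h]
      · have hne : j.succAbove a ≠ j.succAbove b := fun hc => h (Fin.succAbove_right_injective hc)
        simp [Matrix.submatrix_apply, Matrix.one_apply, h, hne]
    rw [hsub, ← eval_charpoly'', hν]
    push_cast [eval_prod]
    simp [hx]
  -- cons decompositions
  have hconsmu : ∀ l : Fin (n+1),
      Multiset.map (fun l => ((μ l : ℝ) : ℂ)) Finset.univ.val
        = ((μ l : ℝ) : ℂ) ::ₘ Multiset.map (fun l => ((μ l : ℝ) : ℂ)) (Finset.univ.erase l).val := by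
    intro l
    conv_lhs => rw [← Multiset.cons_erase (Finset.mem_val.mpr (Finset.mem_univ l))]
    rw [Multiset.map_cons, Finset.erase_val]
  have hconsd : ∀ a : Fin (n+1),
      Multiset.map (fun l => ((d l : ℝ) : ℂ)) Finset.univ.val
        = ((d a : ℝ) : ℂ) ::ₘ Multiset.map (fun l => ((d l : ℝ) : ℂ)) (Finset.univ.erase a).val := by
    intro a
    conv_lhs => rw [← Multiset.cons_erase (Finset.mem_val.mpr (Finset.mem_univ a))]
    rw [Multiset.map_cons, Finset.erase_val]
  -- the key complex identity
  have key : (v j * star (v j)) * (∏ l ∈ Finset.univ.erase i, (x - ((μ l : ℝ) : ℂ)))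
      = ∑ a, U j a * e a * star (U j a) := by
    by_cases hdeg : ∃ l, l ≠ i ∧ ((μ l : ℝ) : ℂ) = x
    · obtain ⟨l₀, hl₀, hlx⟩ := hdeg
      have hcnt : 2 ≤ Multiset.count x (Multiset.map (fun l => ((d l : ℝ) : ℂ)) Finset.univ.val) := by
        rw [← hroots, hconsmu i, ← hx, Multiset.count_cons_self]
        have hmem : x ∈ Multiset.map (fun l => ((μ l : ℝ) : ℂ)) (Finset.univ.erase i).val :=
          Multiset.mem_map.mpr ⟨l₀, Finset.mem_val.mpr (Finset.mem_erase.mpr ⟨hl₀, Finset.mem_univ _⟩), hlx⟩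
        have := Multiset.one_le_count_iff_mem.mpr hmem
        omega
      have hzero : ∀ a : Fin (n+1), e a = 0 := by
        intro a
        have hmem : x ∈ Multiset.map (fun l => ((d l : ℝ) : ℂ)) (Finset.univ.erase a).val := by
          rw [hconsd a, Multiset.count_cons] at hcnt
          rw [← Multiset.one_le_count_iff_mem]
          split_ifs at hcnt <;> omega
        obtain ⟨k, hk, hkx⟩ := Multiset.mem_map.mp hmem
        exact Finset.prod_eq_zero (Finset.mem_val.mp hk) (by rw [hkx, sub_self])
      rw [Finset.prod_eq_zero (Finset.mem_erase.mpr ⟨hl₀, Finset.mem_univ _⟩) (by rw [hlx, sub_self]),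
        mul_zero]
      exact (Finset.sum_eq_zero fun a _ => by rw [hzero a, mul_zero, zero_mul]).symm
    · push_neg at hdeg
      -- unique eigenvalue index a₀
      have hxmem : x ∈ Multiset.map (fun l => ((d l : ℝ) : ℂ)) Finset.univ.val := by
        rw [← hroots]
        exact Multiset.mem_map.mpr ⟨i, Finset.mem_val.mpr (Finset.mem_univ i), hx.symm⟩
      obtain ⟨a₀, _, ha₀⟩ := Multiset.mem_map.mp hxmem
      have hcnt1 : Multiset.count x (Multiset.map (fun l => ((d l : ℝ) : ℂ)) Finset.univ.val) = 1 := by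
        rw [← hroots, hconsmu i, ← hx, Multiset.count_cons_self]
        have : x ∉ Multiset.map (fun l => ((μ l : ℝ) : ℂ)) (Finset.univ.erase i).val := by
          intro hc
          obtain ⟨l, hl, hlx⟩ := Multiset.mem_map.mp hc
          exact hdeg l (Finset.mem_erase.mp (Finset.mem_val.mp hl)).1 hlx
        rw [Multiset.count_eq_zero_of_notMem this]
      have huniq : ∀ a : Fin (n+1), a ≠ a₀ → ((d a : ℝ) : ℂ) ≠ x := by
        intro a ha hax
        rw [hconsd a₀, ha₀, Multiset.count_cons_self] at hcnt1
        have : x ∈ Multiset.map (fun l => ((d l : ℝ) : ℂ)) (Finset.univ.erase a₀).val :=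
          Multiset.mem_map.mpr ⟨a, Finset.mem_val.mpr (Finset.mem_erase.mpr ⟨ha, Finset.mem_univ _⟩), hax⟩
        have := Multiset.one_le_count_iff_mem.mpr this
        omega
      -- multiset equality after removing one copy of x
      have hmm : Multiset.map (fun l => ((d l : ℝ) : ℂ)) (Finset.univ.erase a₀).val
          = Multiset.map (fun l => ((μ l : ℝ) : ℂ)) (Finset.univ.erase i).val := by
        have h9 := hroots
        rw [hconsmu i, hconsd a₀, ha₀, ← hx] at h9
        exact ((Multiset.cons_inj_right x).mp h9).symm
      have he : e a₀ = ∏ l ∈ Finset.univ.erase i, (x - ((μ l : ℝ) : ℂ)) := by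
        show (∏ k ∈ Finset.univ.erase a₀, (x - ((d k : ℝ) : ℂ))) = _
        rw [Finset.prod_eq_multiset_prod, Finset.prod_eq_multiset_prod]
        have t1 : Multiset.map (fun k => x - ((d k : ℝ) : ℂ)) (Finset.univ.erase a₀).val
            = Multiset.map (fun z => x - z)
              (Multiset.map (fun k => ((d k : ℝ) : ℂ)) (Finset.univ.erase a₀).val) := by
          rw [Multiset.map_map, Function.comp_def]
        have t2 : Multiset.map (fun l => x - ((μ l : ℝ) : ℂ)) (Finset.univ.erase i).val
            = Multiset.map (fun z => x - z)
              (Multiset.map (fun l => ((μ l : ℝ) : ℂ)) (Finset.univ.erase i).val) := by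
          rw [Multiset.map_map, Function.comp_def]
        rw [t1, t2, hmm]
      -- eigenvector structure
      set w : Fin (n+1) → ℂ := star U *ᵥ v with hwdef
      have hvw : U *ᵥ w = v := by rw [hwdef, Matrix.mulVec_mulVec, h1, Matrix.one_mulVec]
      have h7 : star U * A = diagonal (fun a => (d a : ℂ)) * star U := by
        rw [hspec, ← mul_assoc, ← mul_assoc, h2, one_mul]
      have h6 : diagonal (fun a => (d a : ℂ)) *ᵥ w = x • w := by
        rw [hwdef, Matrix.mulVec_mulVec, ← h7, ← Matrix.mulVec_mulVec, hv, Matrix.mulVec_smul]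
      have hwa : ∀ a : Fin (n+1), a ≠ a₀ → w a = 0 := by
        intro a ha
        have h8 : (d a : ℂ) * w a = x * w a := by
          have := congrFun h6 a
          simpa [Matrix.mulVec_diagonal] using this
        have h10 : ((d a : ℂ) - x) * w a = 0 := by linear_combination h8
        rcases mul_eq_zero.mp h10 with h11 | h11
        · exact absurd (by linear_combination h11) (huniq a ha)
        · exact h11
      have hveq : ∀ r, v r = w a₀ * U r a₀ := by
        intro r
        rw [← hvw]
        show ∑ a, U r a * w a = w a₀ * U r a₀
        rw [Finset.sum_eq_single a₀ (fun a _ ha => by rw [hwa a ha, mul_zero])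
          (fun h => absurd (Finset.mem_univ a₀) h), mul_comm]
      have hcol : (∑ r, star (U r a₀) * U r a₀) = 1 := by
        have h8 : (star U * U) a₀ a₀ = (1 : Matrix (Fin (n+1)) (Fin (n+1)) ℂ) a₀ a₀ := by rw [h2]
        simpa [Matrix.mul_apply, Matrix.star_apply, Matrix.one_apply] using h8
      have hnorm : w a₀ * star (w a₀) = 1 := by
        have hc : (1 : ℂ) = (star (w a₀) * w a₀) * 1 := by
          calc (1 : ℂ) = star v ⬝ᵥ v := hunit.symm
            _ = ∑ r, star (v r) * v r := rfl
            _ = ∑ r, (star (w a₀) * w a₀) * (star (U r a₀) * U r a₀) := by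
                refine Finset.sum_congr rfl fun r _ => ?_
                rw [hveq r, star_mul']
                ring
            _ = (star (w a₀) * w a₀) * ∑ r, star (U r a₀) * U r a₀ := by rw [← Finset.mul_sum]
            _ = (star (w a₀) * w a₀) * 1 := by rw [hcol]
        linear_combination -hc
      have hUv : v j * star (v j) = U j a₀ * star (U j a₀) := by
        calc v j * star (v j) = (w a₀ * star (w a₀)) * (U j a₀ * star (U j a₀)) := by
              rw [hveq j, star_mul']; ring
          _ = U j a₀ * star (U j a₀) := by rw [hnorm, one_mul]
      rw [Finset.sum_eq_single a₀ (fun a _ ha => by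
          have : e a = 0 := Finset.prod_eq_zero
            (Finset.mem_erase.mpr ⟨Ne.symm ha, Finset.mem_univ a₀⟩) (by rw [ha₀, sub_self])
          rw [this, mul_zero, zero_mul])
        (fun h => absurd (Finset.mem_univ a₀) h), ← he, hUv]
      ring
  -- conclude
  have habs : ((‖v j‖ : ℝ) : ℂ) ^ 2 = v j * star (v j) := by
    calc ((‖v j‖ : ℝ) : ℂ) ^ 2 = ((‖v j‖ ^ 2 : ℝ) : ℂ) := by push_cast; ring
      _ = ((Complex.normSq (v j) : ℝ) : ℂ) := by rw [Complex.sq_norm]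
      _ = v j * star (v j) := (Complex.mul_conj _).symm
  have final : ((‖v j‖ ^ 2 * ∏ l ∈ Finset.univ.erase i, (μ i - μ l) : ℝ) : ℂ)
      = ((∏ l, (μ i - ν l) : ℝ) : ℂ) := by
    rw [hRHS, ← key]
    push_cast
    rw [habs, ← hx]
  exact_mod_cast final
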